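/- Fix κ, λ, γ > 0, and define, for q ∈ ℝ and z > 0, S(q, z) = (2γ + z − (λ + 2κ)(cos q − 1)) / ( (γ + z − (λ + 2κ)(cos q − 1))² − γ² + λ² sin²(q) ). Let σ² = 2κ + λ + λ²/γ. Then for every q ∈ ℝ and z > 0, lim_{ε→0⁺} ε² S(εq, ε²z) = 1 / (z + (q²/2)σ²). -/

import Mathlib

open Filter Topology

/-- Slope limit: `sin (ε * a) / ε → a` as `ε → 0⁺`. -/
lemma sin_mul_div_tendsto (a : ℝ) :
    Tendsto (fun ε : ℝ => Real.sin (ε * a) / ε) (𝓝[>] (0:ℝ)) (𝓝 a) := by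
  have hd : HasDerivAt (fun ε : ℝ => Real.sin (ε * a)) a 0 := by
    have h := (Real.hasDerivAt_sin ((0:ℝ) * a)).comp 0
      ((hasDerivAt_id (0:ℝ)).mul_const a)
    simpa [Function.comp_def] using h
  have h1 := hasDerivAt_iff_tendsto_slope.mp hd
  have h2 : (𝓝[>] (0:ℝ)) ≤ (𝓝[≠] (0:ℝ)) :=
    nhdsWithin_mono _ (fun x hx => ne_of_gt hx)
  refine (h1.mono_left h2).congr (fun ε => ?_)
  simp [slope_fun_def]
  ring

/-- `(1 - cos (ε * q)) / ε ^ 2 → q ^ 2 / 2` as `ε → 0⁺`. -/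
lemma one_sub_cos_div_sq_tendsto (q : ℝ) :
    Tendsto (fun ε : ℝ => (1 - Real.cos (ε * q)) / ε ^ 2)
      (𝓝[>] (0:ℝ)) (𝓝 (q ^ 2 / 2)) := by
  have hs := sin_mul_div_tendsto (q / 2)
  have h : Tendsto (fun ε : ℝ => 2 * (Real.sin (ε * (q / 2)) / ε) ^ 2)
      (𝓝[>] (0:ℝ)) (𝓝 (2 * (q / 2) ^ 2)) :=
    (tendsto_const_nhds.mul (hs.pow 2))
  have hval : 2 * (q / 2) ^ 2 = q ^ 2 / 2 := by ring
  rw [hval] at h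
  refine h.congr' ?_
  filter_upwards [self_mem_nhdsWithin] with ε (hε : 0 < ε)
  have hεne : ε ≠ 0 := ne_of_gt hε
  have hcos : Real.cos (ε * q) = 1 - 2 * Real.sin (ε * q / 2) ^ 2 := by
    have h2 : Real.cos (2 * (ε * q / 2)) =
        Real.cos (ε * q / 2) ^ 2 - Real.sin (ε * q / 2) ^ 2 :=
      Real.cos_two_mul' _
    have hpyth := Real.sin_sq_add_cos_sq (ε * q / 2)
    have : (2 : ℝ) * (ε * q / 2) = ε * q := by ring
    rw [this] at h2
    linarith
  have : ε * (q / 2) = ε * q / 2 := by ring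
  rw [this, hcos]
  field_simp
  ring

/-- Diffusive scaling limit of the Fourier–Laplace transform of the two-state
active particle: `lim_{ε→0⁺} ε² S(εq, ε²z) = 1/(z + (q²/2)σ²)` with
`σ² = 2κ + λ + λ²/γ`. -/
theorem two_state_diffusive_scaling_limit
    (κ lam γ : ℝ) (hκ : 0 < κ) (hlam : 0 < lam) (hγ : 0 < γ)
    (S : ℝ → ℝ → ℝ)
    (hS : ∀ q z, S q z = (2 * γ + z - (lam + 2 * κ) * (Real.cos q - 1)) /
      ((γ + z - (lam + 2 * κ) * (Real.cos q - 1)) ^ 2 - γ ^ 2 +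
        lam ^ 2 * Real.sin q ^ 2))
    (σsq : ℝ) (hσ : σsq = 2 * κ + lam + lam ^ 2 / γ)
    (q z : ℝ) (hz : 0 < z) :
    Tendsto (fun ε : ℝ => ε ^ 2 * S (ε * q) (ε ^ 2 * z))
      (𝓝[>] 0) (𝓝 (1 / (z + q ^ 2 / 2 * σsq))) := by
  set A : ℝ := lam + 2 * κ with hA
  have hApos : 0 < A := by positivity
  set c : ℝ → ℝ := fun ε => (1 - Real.cos (ε * q)) / ε ^ 2 with hc
  set s : ℝ → ℝ := fun ε => Real.sin (ε * q) / ε with hsdef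
  set Num : ℝ → ℝ := fun ε => 2 * γ + ε ^ 2 * (z + A * c ε) with hNum
  set Den : ℝ → ℝ := fun ε =>
    ε ^ 2 * (z + A * c ε) ^ 2 + 2 * γ * (z + A * c ε) + lam ^ 2 * (s ε) ^ 2
    with hDen
  have hctend := one_sub_cos_div_sq_tendsto q
  have hstend := sin_mul_div_tendsto q
  have hε0 : Tendsto (fun ε : ℝ => ε) (𝓝[>] (0:ℝ)) (𝓝 0) :=
    tendsto_id.mono_left nhdsWithin_le_nhds
  -- limit of the inner expression z + A * c ε
  have hin : Tendsto (fun ε : ℝ => z + A * c ε) (𝓝[>] (0:ℝ))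
      (𝓝 (z + A * (q ^ 2 / 2))) :=
    tendsto_const_nhds.add (tendsto_const_nhds.mul hctend)
  have hNumT : Tendsto Num (𝓝[>] (0:ℝ)) (𝓝 (2 * γ)) := by
    have : Tendsto Num (𝓝[>] (0:ℝ))
        (𝓝 (2 * γ + 0 ^ 2 * (z + A * (q ^ 2 / 2)))) :=
      tendsto_const_nhds.add ((hε0.pow 2).mul hin)
    simpa using this
  have hDlim : ℝ := 0
  have hDenT : Tendsto Den (𝓝[>] (0:ℝ))
      (𝓝 (2 * γ * (z + A * (q ^ 2 / 2)) + lam ^ 2 * q ^ 2)) := by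
    have : Tendsto Den (𝓝[>] (0:ℝ))
        (𝓝 (0 ^ 2 * (z + A * (q ^ 2 / 2)) ^ 2 +
          2 * γ * (z + A * (q ^ 2 / 2)) + lam ^ 2 * q ^ 2)) :=
      (((hε0.pow 2).mul (hin.pow 2)).add
        (tendsto_const_nhds.mul hin)).add (tendsto_const_nhds.mul (hstend.pow 2))
    simpa using this
  have hDpos : 0 < 2 * γ * (z + A * (q ^ 2 / 2)) + lam ^ 2 * q ^ 2 := by
    have h1 : 0 < z + A * (q ^ 2 / 2) := by positivity
    have h2 : 0 ≤ lam ^ 2 * q ^ 2 := by positivity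
    nlinarith
  have hratio : Tendsto (fun ε => Num ε / Den ε) (𝓝[>] (0:ℝ))
      (𝓝 ((2 * γ) / (2 * γ * (z + A * (q ^ 2 / 2)) + lam ^ 2 * q ^ 2))) :=
    hNumT.div hDenT (ne_of_gt hDpos)
  have hvalue : (2 * γ) / (2 * γ * (z + A * (q ^ 2 / 2)) + lam ^ 2 * q ^ 2)
      = 1 / (z + q ^ 2 / 2 * σsq) := by
    rw [hσ, hA]
    rw [div_eq_div_iff (ne_of_gt hDpos)]
    · field_simp
      ring
    · have : 0 < z + q ^ 2 / 2 * (2 * κ + lam + lam ^ 2 / γ) := by positivity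
      exact ne_of_gt this
  rw [← hvalue]
  refine hratio.congr' ?_
  filter_upwards [self_mem_nhdsWithin] with ε (hε : 0 < ε)
  have hεne : ε ≠ 0 := ne_of_gt hε
  have hε2 : ε ^ 2 ≠ 0 := pow_ne_zero 2 hεne
  -- identify numerator and denominator
  have hNumEq : Num ε = 2 * γ + ε ^ 2 * z - A * (Real.cos (ε * q) - 1) := by
    simp only [hNum, hc]
    field_simp
    ring
  have hDenEq : Den ε * ε ^ 2 =
      (γ + ε ^ 2 * z - A * (Real.cos (ε * q) - 1)) ^ 2 - γ ^ 2 +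
        lam ^ 2 * Real.sin (ε * q) ^ 2 := by
    simp only [hDen, hc, hsdef]
    field_simp
    ring
  rw [hS, ← hNumEq, ← hDenEq, mul_comm (Den ε) (ε ^ 2), ← mul_div_assoc,
    mul_div_mul_left _ _ hε2]
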